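/- arXiv:2403.16413 — 6 statements merged into one kernel-verified Lean document; each statement's English description precedes it below -/
import Mathlib

section
/- Let α ∈ (0,1). Every measurable test ψ : ℝ → [0,1] with size ∫ψ dμ_0 ≤ α satisfies, for every h > 0, ∫ψ dμ_h ≤ min{α·e^{h/λ}, 1}. (That is, min{α·e^{h/λ}, 1} is the power envelope at level α for testing μ_0 against the positive local alternatives μ_h, h > 0.) -/
open MeasureTheory Real
open Set
open scoped ENNReal NNReal

noncomputable section

attribute [local instance] Classical.propDecidable

/-- The exponential distribution with scale `lam` shifted to start at `h`:
the measure on `ℝ` with Lebesgue density `w ↦ lam⁻¹ e^{−(w−h)/lam} 𝟙{w > h}`. -/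
def expShift (lam h : ℝ) : Measure ℝ :=
  (volume : Measure ℝ).withDensity fun w =>
    ENNReal.ofReal (lam⁻¹ * exp (-(w - h) / lam) * if h < w then 1 else 0)

def dens (lam h w : ℝ) : ℝ := lam⁻¹ * exp (-(w - h) / lam) * if h < w then 1 else 0

lemma dens_nonneg (lam h w : ℝ) (hlam : 0 < lam) : 0 ≤ dens lam h w := by
  unfold dens
  have : (0:ℝ) ≤ if h < w then 1 else 0 := by positivity
  positivity

lemma dens_meas (lam h : ℝ) : Measurable (dens lam h) := by
  unfold dens
  apply Measurable.mul
  · exact (measurable_const.mul ((measurable_id.sub measurable_const).neg.div_const lam).exp)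
  · exact Measurable.ite measurableSet_Ioi measurable_const measurable_const

lemma dens_eq_indicator (lam h : ℝ) :
    dens lam h = (Ioi h).indicator (fun w => lam⁻¹ * exp (-(w - h) / lam)) := by
  ext w
  unfold dens
  by_cases hw : h < w <;> simp [indicator, hw, mem_Ioi]

lemma dens_integrable (lam h : ℝ) (hlam : 0 < lam) : Integrable (dens lam h) := by
  rw [dens_eq_indicator]
  rw [integrable_indicator_iff measurableSet_Ioi]
  have key : IntegrableOn (fun w : ℝ => exp (-(lam⁻¹ * w))) (Ioi h) := by
    simpa [neg_mul] using exp_neg_integrableOn_Ioi h (inv_pos.mpr hlam)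
  have : IntegrableOn (fun w : ℝ => lam⁻¹ * (exp (h / lam) * exp (-(lam⁻¹ * w)))) (Ioi h) :=
    (key.const_mul _).const_mul _
  apply this.congr_fun ?_ measurableSet_Ioi
  intro w _
  simp only []
  rw [← exp_add]
  congr 1
  field_simp
  ring

lemma dens_integral (lam h : ℝ) (hlam : 0 < lam) : ∫ w, dens lam h w = 1 := by
  rw [dens_eq_indicator, integral_indicator measurableSet_Ioi]
  have e1 : ∀ w : ℝ, lam⁻¹ * exp (-(w - h) / lam)
      = lam⁻¹ * exp (h / lam) * exp (-(lam⁻¹ * w)) := by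
    intro w
    rw [mul_assoc, ← exp_add]
    ring_nf
  simp_rw [e1]
  rw [integral_const_mul, integral_comp_mul_left_Ioi (fun x => exp (-x)) h (inv_pos.mpr hlam),
    integral_exp_neg_Ioi]
  rw [smul_eq_mul, inv_inv, mul_mul_mul_comm, ← exp_add]
  have e2 : h / lam + -(lam⁻¹ * h) = 0 := by field_simp; ring
  rw [e2, exp_zero, inv_mul_cancel₀ hlam.ne', mul_one]

lemma integral_expShift (lam h : ℝ) (hlam : 0 < lam) (ψ : ℝ → ℝ) :
    ∫ w, ψ w ∂ expShift lam h = ∫ w, ψ w * dens lam h w := by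
  unfold expShift
  have hmeas : Measurable fun w => (dens lam h w).toNNReal :=
    (dens_meas lam h).real_toNNReal
  have : (fun w => ENNReal.ofReal (lam⁻¹ * exp (-(w - h) / lam) * if h < w then 1 else 0))
      = fun w => ((dens lam h w).toNNReal : ℝ≥0∞) := rfl
  rw [this, integral_withDensity_eq_integral_smul hmeas]
  congr 1
  ext w
  rw [NNReal.smul_def, smul_eq_mul, Real.coe_toNNReal _ (dens_nonneg lam h w hlam)]
  ring

/-- Power envelope against positive alternatives: any level-`α` test of `μ_0`
has power at most `min{α e^{h/λ}, 1}` at `μ_h`, `h > 0`. -/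
theorem power_envelope_pos (lam α : ℝ) (hlam : 0 < lam) (hα : α ∈ Set.Ioo (0 : ℝ) 1)
    (ψ : ℝ → ℝ) (hmeas : Measurable ψ) (hrange : ∀ w, ψ w ∈ Set.Icc (0 : ℝ) 1)
    (hsize : ∫ w, ψ w ∂ expShift lam 0 ≤ α) :
    ∀ h : ℝ, 0 < h → ∫ w, ψ w ∂ expShift lam h ≤ min (α * exp (h / lam)) 1 := by
  intro h hh
  rw [integral_expShift lam h hlam ψ]
  have hint_h : Integrable (fun w => ψ w * dens lam h w) := by
    apply (dens_integrable lam h hlam).mono' ((hmeas.mul (dens_meas lam h)).aestronglyMeasurable)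
    filter_upwards with w
    rw [Pi.mul_apply, norm_mul, norm_of_nonneg (dens_nonneg lam h w hlam)]
    calc ‖ψ w‖ * dens lam h w ≤ 1 * dens lam h w := by
          apply mul_le_mul_of_nonneg_right _ (dens_nonneg lam h w hlam)
          rw [norm_of_nonneg (hrange w).1]; exact (hrange w).2
      _ = dens lam h w := one_mul _
  have hint_0 : Integrable (fun w => exp (h / lam) * (ψ w * dens lam 0 w)) := by
    apply Integrable.const_mul
    apply (dens_integrable lam 0 hlam).mono' ((hmeas.mul (dens_meas lam 0)).aestronglyMeasurable)
    filter_upwards with w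
    rw [Pi.mul_apply, norm_mul, norm_of_nonneg (dens_nonneg lam 0 w hlam)]
    calc ‖ψ w‖ * dens lam 0 w ≤ 1 * dens lam 0 w := by
          apply mul_le_mul_of_nonneg_right _ (dens_nonneg lam 0 w hlam)
          rw [norm_of_nonneg (hrange w).1]; exact (hrange w).2
      _ = dens lam 0 w := one_mul _
  refine le_min ?_ ?_
  · -- bound by α e^{h/λ}
    have hpt : ∀ w, ψ w * dens lam h w ≤ exp (h / lam) * (ψ w * dens lam 0 w) := by
      intro w
      have hd : dens lam h w ≤ exp (h / lam) * dens lam 0 w := by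
        unfold dens
        by_cases hw : h < w
        · have hw0 : (0:ℝ) < w := hh.trans hw
          simp only [hw, hw0, if_pos]
          rw [mul_one, mul_one, ← mul_assoc, mul_comm (exp (h/lam)) lam⁻¹, mul_assoc, ← exp_add]
          gcongr lam⁻¹ * exp ?_
          · exact le_of_eq (by ring)
        · have : dens lam h w = 0 := by unfold dens; simp [hw]
          simp only [hw, if_neg, not_false_iff, mul_zero]
          have d0 : (0:ℝ) ≤ lam⁻¹ * exp (-(w - 0) / lam) * if (0:ℝ) < w then 1 else 0 := by
            have : (0:ℝ) ≤ if (0:ℝ) < w then 1 else 0 := by positivity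
            positivity
          positivity
      calc ψ w * dens lam h w ≤ ψ w * (exp (h / lam) * dens lam 0 w) :=
            mul_le_mul_of_nonneg_left hd (hrange w).1
        _ = exp (h / lam) * (ψ w * dens lam 0 w) := by ring
    calc ∫ w, ψ w * dens lam h w ≤ ∫ w, exp (h / lam) * (ψ w * dens lam 0 w) :=
          integral_mono hint_h hint_0 hpt
      _ = exp (h / lam) * ∫ w, ψ w * dens lam 0 w := integral_const_mul _ _
      _ = exp (h / lam) * ∫ w, ψ w ∂ expShift lam 0 := by rw [integral_expShift lam 0 hlam ψ]
      _ ≤ exp (h / lam) * α := by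
          apply mul_le_mul_of_nonneg_left hsize (exp_pos _).le
      _ = α * exp (h / lam) := mul_comm _ _
  · -- bound by 1
    calc ∫ w, ψ w * dens lam h w ≤ ∫ w, dens lam h w := by
          apply integral_mono hint_h (dens_integrable lam h hlam)
          intro w
          calc ψ w * dens lam h w ≤ 1 * dens lam h w :=
                mul_le_mul_of_nonneg_right (hrange w).2 (dens_nonneg lam h w hlam)
            _ = dens lam h w := one_mul _
      _ = 1 := dens_integral lam h hlam
end
end

section
/- Let α ∈ (0,1) and h̄ > 0. (a) If α ≤ e^{−h̄/λ}, the test ψ(w) := α·e^{h̄/λ} if (w > h̄ or w ≤ 0) and ψ(w) := 0 otherwise satisfies ∫ψ dμ_0 = α and ∫ψ dμ_{h̄} = α·e^{h̄/λ}. (b) If α > e^{−h̄/λ}, the test ψ(w) := 1 if w > h̄ and ψ(w) := (α − e^{−h̄/λ})/(1 − e^{−h̄/λ}) if w ≤ h̄ satisfies ∫ψ dμ_0 = α and ∫ψ dμ_{h̄} = 1. In both cases the test attains the Neyman–Pearson power Π(h̄) = α·e^{h̄/λ} (case (a)) or Π(h̄) = 1 (case (b)) for testing μ_0 against μ_{h̄}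 at level α. -/
open MeasureTheory Real

noncomputable section

attribute [local instance] Classical.propDecidable

lemma expShift_dens_meas (lam h : ℝ) :
    Measurable fun w : ℝ => lam⁻¹ * exp (-(w - h) / lam) * if h < w then 1 else 0 := by
  apply Measurable.mul
  · exact (measurable_const.mul (((measurable_id.sub measurable_const).neg.div_const
      lam).exp))
  · exact Measurable.ite (measurableSet_lt measurable_const measurable_id)
      measurable_const measurable_const

lemma expShift_dens_nonneg (lam h : ℝ) (hlam : 0 < lam) (w : ℝ) :
    0 ≤ lam⁻¹ * exp (-(w - h) / lam) * if h < w then 1 else 0 := by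
  have h1 : (0:ℝ) ≤ lam⁻¹ * exp (-(w - h) / lam) :=
    mul_nonneg (inv_nonneg.mpr hlam.le) (exp_nonneg _)
  exact mul_nonneg h1 (by split <;> norm_num)

/-- Reduction of integrals over `expShift` to Lebesgue integrals. -/
lemma integral_expShift_s9 (lam h : ℝ) (hlam : 0 < lam) (ψ : ℝ → ℝ) :
    ∫ w, ψ w ∂ expShift lam h
      = ∫ w, (lam⁻¹ * exp (-(w - h) / lam) * if h < w then 1 else 0) * ψ w := by
  set d : ℝ → ℝ := fun w => lam⁻¹ * exp (-(w - h) / lam) * if h < w then 1 else 0 with hd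
  have hmeas : Measurable fun w => (d w).toNNReal :=
    (expShift_dens_meas lam h).real_toNNReal
  have h1 : expShift lam h = (volume : Measure ℝ).withDensity
      fun w => ((d w).toNNReal : ENNReal) := by
    simp only [expShift, ENNReal.ofReal, hd]
  rw [h1, integral_withDensity_eq_integral_smul hmeas]
  congr 1
  funext w
  rw [NNReal.smul_def, smul_eq_mul, Real.coe_toNNReal _ (expShift_dens_nonneg lam h hlam w)]

lemma exp_arg_split (lam h : ℝ) (hlam : 0 < lam) (x : ℝ) :
    -(x - h) / lam = h / lam + -(lam⁻¹ * x) := by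
  field_simp
  ring

lemma exp_integrableOn (lam h a : ℝ) (hlam : 0 < lam) (c : ℝ) :
    IntegrableOn (fun x : ℝ => c * (lam⁻¹ * exp (-(x - h) / lam))) (Set.Ioi a) := by
  have hb : 0 < lam⁻¹ := inv_pos.mpr hlam
  have h0 : IntegrableOn (fun x : ℝ => exp (-(lam⁻¹ * x))) (Set.Ioi a) := by
    simpa [neg_mul] using exp_neg_integrableOn_Ioi a hb
  have heq : (fun x : ℝ => c * (lam⁻¹ * exp (-(x - h) / lam)))
      = fun x => (c * lam⁻¹ * exp (h / lam)) * exp (-(lam⁻¹ * x)) := by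
    funext x
    rw [exp_arg_split lam h hlam x, Real.exp_add]
    ring
  rw [heq]
  exact h0.const_mul _

lemma key_integral (lam h a : ℝ) (hlam : 0 < lam) :
    ∫ x in Set.Ioi a, lam⁻¹ * exp (-(x - h) / lam) = exp (-(a - h) / lam) := by
  have hb : 0 < lam⁻¹ := inv_pos.mpr hlam
  have hrw : ∀ x : ℝ, lam⁻¹ * exp (-(x - h) / lam)
      = (lam⁻¹ * exp (h / lam)) * exp (-(lam⁻¹ * x)) := by
    intro x
    rw [exp_arg_split lam h hlam x, Real.exp_add]
    ring
  simp_rw [hrw]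
  rw [MeasureTheory.integral_const_mul]
  have hcv := integral_comp_mul_left_Ioi (fun y : ℝ => exp (-y)) a hb
  rw [hcv, smul_eq_mul, integral_exp_neg_Ioi, inv_inv]
  have : lam⁻¹ * exp (h / lam) * (lam * exp (-(lam⁻¹ * a)))
      = exp (h / lam) * exp (-(lam⁻¹ * a)) := by
    field_simp
  rw [this, ← Real.exp_add, ← exp_arg_split lam h hlam a]

/-- The Neyman–Pearson tests of `μ_0` against `μ_{h̄}`, `h̄ > 0`, and their size and power:
(a) when `α ≤ e^{−h̄/λ}`, and (b) when `α > e^{−h̄/λ}`. -/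
theorem np_test_pos (lam α hb : ℝ) (hlam : 0 < lam) (hα : α ∈ Set.Ioo (0 : ℝ) 1)
    (hhb : 0 < hb) :
    (α ≤ exp (-hb / lam) →
      (∫ w, (if hb < w ∨ w ≤ 0 then α * exp (hb / lam) else 0) ∂ expShift lam 0 = α ∧
       ∫ w, (if hb < w ∨ w ≤ 0 then α * exp (hb / lam) else 0) ∂ expShift lam hb =
         α * exp (hb / lam))) ∧
    (exp (-hb / lam) < α →
      (∫ w, (if hb < w then (1 : ℝ) else (α - exp (-hb / lam)) / (1 - exp (-hb / lam)))
          ∂ expShift lam 0 = α ∧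
       ∫ w, (if hb < w then (1 : ℝ) else (α - exp (-hb / lam)) / (1 - exp (-hb / lam)))
          ∂ expShift lam hb = 1)) := by
  have hexp1 : exp (-hb / lam) * exp (hb / lam) = 1 := by
    rw [← Real.exp_add]; simp [neg_div]
  constructor
  · intro _
    constructor
    · -- size in case (a)
      rw [integral_expShift_s9 lam 0 hlam]
      have hfun : (fun w : ℝ => (lam⁻¹ * exp (-(w - 0) / lam) * if (0:ℝ) < w then 1 else 0)
            * if hb < w ∨ w ≤ 0 then α * exp (hb / lam) else 0)
          = Set.indicator (Set.Ioi hb)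
            (fun w => (α * exp (hb / lam)) * (lam⁻¹ * exp (-(w - 0) / lam))) := by
        funext w
        by_cases h1 : hb < w
        · have h2 : (0:ℝ) < w := hhb.trans h1
          rw [Set.indicator_of_mem (Set.mem_Ioi.mpr h1), if_pos h2, if_pos (Or.inl h1)]
          ring
        · rw [Set.indicator_of_notMem (by simpa using h1)]
          by_cases h2 : (0:ℝ) < w
          · rw [if_pos h2, if_neg (by push_neg; exact ⟨not_lt.mp h1, h2⟩)]
            ring
          · rw [if_neg h2]
            ring
      rw [hfun, MeasureTheory.integral_indicator measurableSet_Ioi,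
        MeasureTheory.integral_const_mul (α * exp (hb / lam))
          (fun w => lam⁻¹ * exp (-(w - 0) / lam)),
        key_integral lam 0 hb hlam]
      rw [sub_zero, mul_assoc, mul_comm (exp (hb/lam)), hexp1, mul_one]
    · -- power in case (a)
      rw [integral_expShift_s9 lam hb hlam]
      have hfun : (fun w : ℝ => (lam⁻¹ * exp (-(w - hb) / lam) * if hb < w then 1 else 0)
            * if hb < w ∨ w ≤ 0 then α * exp (hb / lam) else 0)
          = Set.indicator (Set.Ioi hb)
            (fun w => (α * exp (hb / lam)) * (lam⁻¹ * exp (-(w - hb) / lam))) := by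
        funext w
        by_cases h1 : hb < w
        · rw [Set.indicator_of_mem (Set.mem_Ioi.mpr h1), if_pos h1, if_pos (Or.inl h1)]
          ring
        · rw [Set.indicator_of_notMem (by simpa using h1), if_neg h1]
          ring
      rw [hfun, MeasureTheory.integral_indicator measurableSet_Ioi,
        MeasureTheory.integral_const_mul (α * exp (hb / lam))
          (fun w => lam⁻¹ * exp (-(w - hb) / lam)),
        key_integral lam hb hb hlam]
      simp
  · intro hcase
    set t : ℝ := (α - exp (-hb / lam)) / (1 - exp (-hb / lam)) with ht
    have hlt : exp (-hb / lam) < 1 := by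
      apply Real.exp_lt_one_iff.mpr
      exact div_neg_of_neg_of_pos (neg_lt_zero.mpr hhb) hlam
    constructor
    · -- size in case (b)
      rw [integral_expShift_s9 lam 0 hlam]
      have hfun : (fun w : ℝ => (lam⁻¹ * exp (-(w - 0) / lam) * if (0:ℝ) < w then 1 else 0)
            * if hb < w then (1:ℝ) else t)
          = (fun w => Set.indicator (Set.Ioi (0:ℝ))
              (fun w => t * (lam⁻¹ * exp (-(w - 0) / lam))) w
            + Set.indicator (Set.Ioi hb)
              (fun w => (1 - t) * (lam⁻¹ * exp (-(w - 0) / lam))) w) := by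
        funext w
        by_cases h1 : hb < w
        · have h2 : (0:ℝ) < w := hhb.trans h1
          rw [Set.indicator_of_mem (Set.mem_Ioi.mpr h1),
            Set.indicator_of_mem (Set.mem_Ioi.mpr h2), if_pos h1, if_pos h2]
          ring
        · rw [Set.indicator_of_notMem (show w ∉ Set.Ioi hb by simpa using h1), if_neg h1]
          by_cases h2 : (0:ℝ) < w
          · rw [Set.indicator_of_mem (Set.mem_Ioi.mpr h2), if_pos h2]
            ring
          · rw [Set.indicator_of_notMem (show w ∉ Set.Ioi (0:ℝ) by simpa using h2),
              if_neg h2]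
            ring
      rw [hfun]
      rw [MeasureTheory.integral_add
        ((MeasureTheory.integrable_indicator_iff measurableSet_Ioi).mpr
          (exp_integrableOn lam 0 0 hlam t))
        ((MeasureTheory.integrable_indicator_iff measurableSet_Ioi).mpr
          (exp_integrableOn lam 0 hb hlam (1 - t)))]
      rw [MeasureTheory.integral_indicator measurableSet_Ioi,
        MeasureTheory.integral_indicator measurableSet_Ioi,
        MeasureTheory.integral_const_mul t (fun w => lam⁻¹ * exp (-(w - 0) / lam)),
        MeasureTheory.integral_const_mul (1 - t) (fun w => lam⁻¹ * exp (-(w - 0) / lam)),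
        key_integral lam 0 0 hlam, key_integral lam 0 hb hlam]
      have hne : (1 : ℝ) - exp (-hb / lam) ≠ 0 := by linarith
      rw [sub_zero, sub_zero, neg_zero, zero_div, Real.exp_zero, mul_one]
      have key : t * (1 - exp (-hb / lam)) = α - exp (-hb / lam) := by
        rw [ht]; exact div_mul_cancel₀ _ hne
      linear_combination key
    · -- power in case (b)
      rw [integral_expShift_s9 lam hb hlam]
      have hfun : (fun w : ℝ => (lam⁻¹ * exp (-(w - hb) / lam) * if hb < w then 1 else 0)
            * if hb < w then (1:ℝ) else t)
          = Set.indicator (Set.Ioi hb) (fun w => lam⁻¹ * exp (-(w - hb) / lam)) := by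
        funext w
        by_cases h1 : hb < w
        · rw [Set.indicator_of_mem (Set.mem_Ioi.mpr h1), if_pos h1, if_pos h1]
          ring
        · rw [Set.indicator_of_notMem (by simpa using h1), if_neg h1, if_neg h1]
          ring
      rw [hfun, MeasureTheory.integral_indicator measurableSet_Ioi,
        key_integral lam hb hb hlam]
      simp
end
end

section
/- Let λ > 0, α ∈ (0,1), and h, h̄ > 0. If α ≤ e^{−h̄/λ}, then min{α·e^{h/λ}, 1} ≥ α·e^{min{h,h̄}/λ}. If α > e^{−h̄/λ}, then min{α·e^{h/λ}, 1} ≥ (α − e^{−h̄/λ})/(1 − e^{−h̄/λ}) + min{e^{(h−h̄)/λ}, 1}·(1 − α)/(1 − e^{−h̄/λ}). (That is, the power envelope Π(h) = min{α·e^{h/λ}, 1} dominates the lower power bound π_L(h,h̄) of the one-sided NLR test for all h, h̄ > 0.) -/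
open Real

/-- The power envelope `Π(h) = min{α e^{h/λ}, 1}` dominates the lower power bound
`π_L(h, h̄)` of the one-sided NLR test, for all `h, h̄ > 0`. -/
theorem envelope_dominates_piL (lam α h hb : ℝ) (hlam : 0 < lam)
    (hα : α ∈ Set.Ioo (0 : ℝ) 1) (hh : 0 < h) (hhb : 0 < hb) :
    (α ≤ exp (-hb / lam) →
      α * exp (min h hb / lam) ≤ min (α * exp (h / lam)) 1) ∧
    (exp (-hb / lam) < α →
      (α - exp (-hb / lam)) / (1 - exp (-hb / lam)) +
          min (exp ((h - hb) / lam)) 1 * (1 - α) / (1 - exp (-hb / lam)) ≤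
        min (α * exp (h / lam)) 1) := by
  obtain ⟨hα0, hα1⟩ := hα
  have hE : (0:ℝ) < exp (-hb / lam) := exp_pos _
  have hxpos : (0:ℝ) < exp (h / lam) := exp_pos _
  have hx1 : (1:ℝ) < exp (h / lam) := by
    rw [show (1:ℝ) = exp 0 by simp]
    exact exp_lt_exp.mpr (by positivity)
  have hE1 : exp (-hb / lam) < 1 := by
    rw [show (1:ℝ) = exp 0 by simp]
    apply exp_lt_exp.mpr
    have : 0 < hb / lam := by positivity
    linarith [this, (by ring : -hb / lam = -(hb / lam))]
  have hmul : exp (-hb / lam) * exp (hb / lam) = 1 := by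
    rw [← exp_add]; ring_nf; simp
  have hxE : exp ((h - hb) / lam) = exp (h / lam) * exp (-hb / lam) := by
    rw [← exp_add]; ring_nf
  constructor
  · intro hle
    refine le_min ?_ ?_
    · gcongr
      exact min_le_left h hb
    · have h1 : exp (min h hb / lam) ≤ exp (hb / lam) := by
        gcongr; exact min_le_right h hb
      calc α * exp (min h hb / lam) ≤ exp (-hb / lam) * exp (hb / lam) := by
            apply mul_le_mul hle h1 (exp_pos _).le hE.le
        _ = 1 := hmul
  · intro hlt
    have hD : (0:ℝ) < 1 - exp (-hb / lam) := by linarith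
    rcases le_or_gt 1 (exp ((h - hb) / lam)) with hc | hc
    · rw [min_eq_right hc]
      have hx1' : 1 ≤ exp (h / lam) * exp (-hb / lam) := by rw [← hxE]; exact hc
      have hlhs : (α - exp (-hb / lam)) / (1 - exp (-hb / lam)) +
          1 * (1 - α) / (1 - exp (-hb / lam)) = 1 := by
        rw [one_mul, ← add_div, div_eq_one_iff_eq hD.ne']; ring
      rw [hlhs]
      refine le_min ?_ le_rfl
      nlinarith
    · rw [min_eq_left hc.le]
      refine le_min ?_ ?_
      · rw [← add_div, div_le_iff₀ hD]
        nlinarith [mul_pos hα0 hxpos, hxE, mul_nonneg (sub_nonneg.mpr hlt.le) (sub_nonneg.mpr hx1.le)]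
      · rw [← add_div, div_le_iff₀ hD]
        nlinarith [hxE, mul_nonneg (sub_nonneg.mpr hc.le) (sub_nonneg.mpr hα1.le)]
end

section
/- Let α ∈ (0,1) and define the nonrandomized test φ : ℝ → {0,1} by φ(w) := 1 if w > −λ·log α or w ≤ 0, and φ(w) := 0 otherwise. Then ∫φ dμ_0 = α and, for every h ∈ ℝ, ∫φ dμ_h = min{α·e^{h/λ}, 1} + 1 − min{e^{h/λ}, 1}. In particular, combined with the two-sided power envelope, φ is a uniformly most powerful level-α test of μ_0 against {μ_h : h ≠ 0}, without any unbiasedness restriction. -/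
open MeasureTheory Real

noncomputable section

attribute [local instance] Classical.propDecidable

namespace UmpAux

lemma cont (lam h : ℝ) : Continuous (fun x : ℝ => lam⁻¹ * exp (-(x - h) / lam)) := by
  fun_prop

lemma hasDerivAt_aux (lam h : ℝ) (hlam : 0 < lam) (x : ℝ) :
    HasDerivAt (fun x : ℝ => -exp (-(x - h) / lam)) (lam⁻¹ * exp (-(x - h) / lam)) x := by
  have h1 : HasDerivAt (fun x : ℝ => -(x - h) / lam) (-1 / lam) x :=
    (((hasDerivAt_id x).sub_const h).neg).div_const lam
  have h2 : HasDerivAt (fun x : ℝ => -exp (-(x - h) / lam)) (-(exp (-(x - h) / lam) * (-1 / lam))) x :=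
    (h1.exp).neg
  convert h2 using 1
  ring

lemma tendsto_aux (lam h : ℝ) (hlam : 0 < lam) :
    Filter.Tendsto (fun x : ℝ => -exp (-(x - h) / lam)) Filter.atTop (nhds 0) := by
  have h1 : Filter.Tendsto (fun x : ℝ => -(x - h) / lam) Filter.atTop Filter.atBot := by
    apply Filter.Tendsto.atBot_div_const hlam
    have : Filter.Tendsto (fun x : ℝ => x - h) Filter.atTop Filter.atTop :=
      Filter.tendsto_atTop_add_const_right _ (-h) Filter.tendsto_id
    exact Filter.tendsto_neg_atBot_iff.mpr this
  have h2 := (Real.tendsto_exp_atBot).comp h1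
  simpa using h2.neg

lemma integrableOn_Ioi (lam h a : ℝ) (hlam : 0 < lam) :
    IntegrableOn (fun x : ℝ => lam⁻¹ * exp (-(x - h) / lam)) (Set.Ioi a) volume := by
  apply integrableOn_Ioi_deriv_of_nonneg'
    (g := fun x : ℝ => -exp (-(x - h) / lam)) (l := 0)
  · exact fun x _ => hasDerivAt_aux lam h hlam x
  · intro x _
    positivity
  · exact tendsto_aux lam h hlam

lemma integral_Ioi (lam h a : ℝ) (hlam : 0 < lam) :
    ∫ x in Set.Ioi a, lam⁻¹ * exp (-(x - h) / lam) = exp (-(a - h) / lam) := by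
  rw [integral_Ioi_of_hasDerivAt_of_tendsto' (fun x _ => hasDerivAt_aux lam h hlam x)
    (integrableOn_Ioi lam h a hlam) (tendsto_aux lam h hlam)]
  ring

lemma lint_Ioi (lam h a : ℝ) (hlam : 0 < lam) :
    ∫⁻ x in Set.Ioi a, ENNReal.ofReal (lam⁻¹ * exp (-(x - h) / lam)) =
      ENNReal.ofReal (exp (-(a - h) / lam)) := by
  rw [← ofReal_integral_eq_lintegral_ofReal (integrableOn_Ioi lam h a hlam)
    (Filter.Eventually.of_forall fun x => by positivity)]
  rw [integral_Ioi lam h a hlam]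

lemma lint_Ioc (lam h : ℝ) (hlam : 0 < lam) (hh : h < 0) :
    ∫⁻ x in Set.Ioc h 0, ENNReal.ofReal (lam⁻¹ * exp (-(x - h) / lam)) =
      ENNReal.ofReal (1 - exp (h / lam)) := by
  rw [← ofReal_integral_eq_lintegral_ofReal ((cont lam h).integrableOn_Ioc)
    (Filter.Eventually.of_forall fun x => by positivity)]
  congr 1
  rw [← intervalIntegral.integral_of_le hh.le]
  rw [intervalIntegral.integral_eq_sub_of_hasDerivAt
    (f := fun x : ℝ => -exp (-(x - h) / lam)) (fun x _ => hasDerivAt_aux lam h hlam x)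
    ((cont lam h).intervalIntegrable h 0)]
  simp only [zero_sub, sub_self, neg_neg, neg_zero, zero_div, Real.exp_zero]
  ring

lemma expShift_apply (lam h : ℝ) {s : Set ℝ} (hs : MeasurableSet s) :
    expShift lam h s =
      ∫⁻ w in s ∩ Set.Ioi h, ENNReal.ofReal (lam⁻¹ * exp (-(w - h) / lam)) := by
  rw [expShift, withDensity_apply _ hs]
  have heq : ∀ w : ℝ, ENNReal.ofReal (lam⁻¹ * exp (-(w - h) / lam) * if h < w then 1 else 0)
      = (Set.Ioi h).indicator (fun w => ENNReal.ofReal (lam⁻¹ * exp (-(w - h) / lam))) w := by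
    intro w
    by_cases hw : h < w <;> simp [Set.indicator, hw]
  simp_rw [heq]
  rw [lintegral_indicator measurableSet_Ioi _, Measure.restrict_restrict measurableSet_Ioi,
    Set.inter_comm]

lemma power (lam α h : ℝ) (hlam : 0 < lam) (hα : α ∈ Set.Ioo (0 : ℝ) 1) :
    ∫ w, (if -lam * Real.log α < w ∨ w ≤ 0 then (1 : ℝ) else 0) ∂ expShift lam h =
      min (α * exp (h / lam)) 1 + 1 - min (exp (h / lam)) 1 := by
  set c := -lam * Real.log α with hc_def
  have hlogα : Real.log α < 0 := Real.log_neg hα.1 hα.2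
  have hc : 0 < c := by
    rw [hc_def]
    nlinarith
  have hαexp : α * exp (h / lam) = exp (Real.log α + h / lam) := by
    rw [Real.exp_add, Real.exp_log hα.1]
  -- rewrite integrand as indicator
  have hint : (fun w : ℝ => if c < w ∨ w ≤ 0 then (1 : ℝ) else 0)
      = (Set.Ioi c ∪ Set.Iic 0).indicator 1 := by
    funext w
    by_cases hw : c < w ∨ w ≤ 0 <;> simp [Set.indicator, hw]
  rw [hint, integral_indicator_one (measurableSet_Ioi.union measurableSet_Iic)]
  have hdisj : Disjoint (Set.Ioi c) (Set.Iic (0 : ℝ)) :=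
    (Set.Iic_disjoint_Ioi hc.le).symm
  rw [measureReal_def, measure_union hdisj measurableSet_Iic]
  -- first piece
  have h1 : expShift lam h (Set.Ioi c) =
      ENNReal.ofReal (min (α * exp (h / lam)) 1) := by
    rw [expShift_apply lam h measurableSet_Ioi, Set.Ioi_inter_Ioi,
      lint_Ioi lam h _ hlam]
    congr 1
    rcases le_total c h with H | H
    · have hmax : c ⊔ h = h := sup_eq_right.mpr H
      rw [hmax]
      have h1' : (1 : ℝ) ≤ α * exp (h / lam) := by
        rw [hαexp, ← Real.exp_zero]
        apply Real.exp_le_exp.mpr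
        rw [hc_def] at H
        rw [← sub_nonneg]
        have : -Real.log α ≤ h / lam := by
          rw [le_div_iff₀ hlam]
          nlinarith
        linarith
      rw [min_eq_right h1']
      simp
    · have hmax : c ⊔ h = c := sup_eq_left.mpr H
      rw [hmax]
      have h1' : α * exp (h / lam) ≤ 1 := by
        rw [hαexp, ← Real.exp_zero]
        apply Real.exp_le_exp.mpr
        rw [hc_def] at H
        have : h / lam ≤ -Real.log α := by
          rw [div_le_iff₀ hlam]
          nlinarith
        linarith
      rw [min_eq_left h1']
      rw [hαexp]
      congr 1
      rw [hc_def]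
      field_simp
      ring
  -- second piece
  have h2 : expShift lam h (Set.Iic 0) =
      ENNReal.ofReal (1 - min (exp (h / lam)) 1) := by
    rw [expShift_apply lam h measurableSet_Iic, Set.inter_comm, Set.Ioi_inter_Iic]
    rcases lt_or_ge h 0 with H | H
    · rw [lint_Ioc lam h hlam H]
      congr 1
      have : exp (h / lam) ≤ 1 := by
        rw [← Real.exp_zero]
        apply Real.exp_le_exp.mpr
        exact div_nonpos_of_nonpos_of_nonneg H.le hlam.le
      rw [min_eq_left this]
    · rw [Set.Ioc_eq_empty (by exact not_lt.mpr H)]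
      have hge : (1:ℝ) ≤ exp (h / lam) := by
        rw [← Real.exp_zero]
        exact Real.exp_le_exp.mpr (div_nonneg H hlam.le)
      rw [min_eq_right hge]
      simp
  rw [h1, h2]
  have hA : 0 ≤ min (α * exp (h / lam)) 1 := le_min (mul_nonneg hα.1.le (Real.exp_nonneg _)) zero_le_one
  have hB : 0 ≤ 1 - min (exp (h / lam)) 1 := by
    have : min (exp (h / lam)) 1 ≤ 1 := min_le_right _ _
    linarith
  rw [← ENNReal.ofReal_add hA hB, ENNReal.toReal_ofReal (by linarith)]
  ring

end UmpAux

/-- The nonrandomized two-sided test `φ(w) = 𝟙{w > −λ log α or w ≤ 0}` has exact size `α`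
and attains the two-sided power envelope for every `h`: it is a uniformly most powerful
level-`α` test of `μ_0` against `{μ_h : h ≠ 0}`. -/
theorem ump_two_sided_test (lam α : ℝ) (hlam : 0 < lam) (hα : α ∈ Set.Ioo (0 : ℝ) 1) :
    ∫ w, (if -lam * Real.log α < w ∨ w ≤ 0 then (1 : ℝ) else 0) ∂ expShift lam 0 = α ∧
    ∀ h : ℝ, ∫ w, (if -lam * Real.log α < w ∨ w ≤ 0 then (1 : ℝ) else 0) ∂ expShift lam h =
      min (α * exp (h / lam)) 1 + 1 - min (exp (h / lam)) 1 := by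
  constructor
  · rw [UmpAux.power lam α 0 hlam hα]
    simp [min_eq_left hα.2.le]
  · exact fun h => UmpAux.power lam α h hlam hα
end
end

section
/- Assume additionally that G_j > 0 for every j, let λ := (Σ_{j=1}^L G_j/λ_j)^{-1}, and let α ∈ (0,1). Every measurable test ψ : ℝ^L → [0,1] with size ∫ψ dν_0 ≤ α satisfies, for every h > 0, ∫ψ dν_h ≤ min{α·e^{h/λ}, 1}. (That is, min{α·e^{h/λ}, 1} is the power envelope at level α for testing ν_0 against the positive local alternatives ν_h, h > 0, in the limit experiment of the covariate model.) -/
open MeasureTheory Real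

open scoped ENNReal

noncomputable section

attribute [local instance] Classical.propDecidable

-- Lemma A: lintegral of product over pi measure
lemma lintegral_pi_prod {n : ℕ} (μ : Fin n → Measure ℝ) [∀ i, SigmaFinite (μ i)]
    (f : Fin n → ℝ → ℝ≥0∞) (hf : ∀ i, Measurable (f i)) :
    ∫⁻ x, ∏ i, f i (x i) ∂Measure.pi μ = ∏ i, ∫⁻ x, f i x ∂(μ i) := by
  induction n with
  | zero => simp [Measure.pi_of_empty]
  | succ n ih =>
    have h := (measurePreserving_piFinSuccAbove μ 0).symm
    have hFm : Measurable fun x : Fin (n+1) → ℝ => ∏ i, f i (x i) := by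
      exact Finset.measurable_prod _ fun i _ => (hf i).comp (measurable_pi_apply i)
    rw [← h.lintegral_comp hFm]
    simp_rw [MeasurableEquiv.piFinSuccAbove_symm_apply, Fin.insertNthEquiv,
      Fin.prod_univ_succ, Fin.insertNth_zero]
    simp only [Fin.zero_succAbove, cast_eq, Function.comp_def, Fin.cons_zero, Fin.cons_succ,
      Equiv.coe_fn_mk]
    rw [lintegral_prod_mul (f := f 0) (g := fun y : Fin n → ℝ => ∏ i, f i.succ (y i))
      ((hf 0).aemeasurable)
      ((Finset.measurable_prod _ fun i _ => (hf i.succ).comp (measurable_pi_apply i)).aemeasurable)]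
    rw [ih (fun i => μ i.succ) (fun i => f i.succ) (fun i => hf i.succ)]

-- Lemma B: pi of withDensity = withDensity of pi
lemma pi_withDensity_eq {n : ℕ} (f : Fin n → ℝ → ℝ≥0∞)
    [∀ i, SigmaFinite ((volume : Measure ℝ).withDensity (f i))]
    (hf : ∀ i, Measurable (f i)) :
    Measure.pi (fun i => (volume : Measure ℝ).withDensity (f i)) =
      (Measure.pi fun _ : Fin n => (volume : Measure ℝ)).withDensity
        (fun x => ∏ i, f i (x i)) := by
  refine Measure.pi_eq fun s hs => ?_
  rw [withDensity_apply _ (MeasurableSet.univ_pi hs),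
    ← lintegral_indicator (μ := Measure.pi fun _ : Fin n => (volume : Measure ℝ))
      (MeasurableSet.univ_pi hs)]
  have heq : (Set.univ.pi s).indicator (fun x => ∏ i, f i (x i)) =
      fun x => ∏ i, (s i).indicator (f i) (x i) := by
    funext x
    by_cases hx : x ∈ Set.univ.pi s
    · rw [Set.indicator_of_mem hx]
      exact Finset.prod_congr rfl fun i _ =>
        (Set.indicator_of_mem (hx i (Set.mem_univ i)) _).symm
    · rw [Set.indicator_of_notMem hx]
      rw [Set.mem_univ_pi] at hx
      push_neg at hx
      obtain ⟨i, hi⟩ := hx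
      exact (Finset.prod_eq_zero (Finset.mem_univ i) (Set.indicator_of_notMem hi _)).symm
  rw [heq, lintegral_pi_prod _ _ (fun i => (hf i).indicator (hs i))]
  exact Finset.prod_congr rfl fun i _ => by
    rw [lintegral_indicator (hs i), withDensity_apply _ (hs i)]

-- mass of each shifted exponential factor
lemma factor_mass {r : ℝ} (hr : 0 < r) (a : ℝ) :
    ∫⁻ w, ENNReal.ofReal (r⁻¹ * exp (-(w - a) / r) * if a < w then 1 else 0)
      ∂(volume : Measure ℝ) = 1 := by
  have hd : (fun w : ℝ => ENNReal.ofReal (r⁻¹ * exp (-(w - a) / r) * if a < w then 1 else 0))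
      = fun w => (fun x : ℝ => ENNReal.ofReal (r⁻¹ * exp (-x / r) * if 0 < x then 1 else 0))
        (w + -a) := by
    funext w
    simp only [← sub_eq_add_neg, sub_pos]
  rw [hd, lintegral_add_right_eq_self
    (fun x : ℝ => ENNReal.ofReal (r⁻¹ * exp (-x / r) * if 0 < x then 1 else 0)) (-a)]
  have hae : (fun x : ℝ => ENNReal.ofReal (r⁻¹ * exp (-x / r) * if 0 < x then 1 else 0))
      =ᵐ[volume] ProbabilityTheory.exponentialPDF r⁻¹ := by
    refine ae_iff.mpr (measure_mono_null (t := {0}) (fun x hx => ?_) Real.volume_singleton)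
    simp only [Set.mem_setOf_eq] at hx
    simp only [Set.mem_singleton_iff]
    by_contra hx0
    apply hx
    rcases lt_trichotomy x 0 with hneg | hzero | hpos
    · rw [ProbabilityTheory.exponentialPDF_of_neg hneg, if_neg (by linarith), mul_zero,
        ENNReal.ofReal_zero]
    · exact absurd hzero hx0
    · rw [ProbabilityTheory.exponentialPDF_of_nonneg hpos.le, if_pos hpos, mul_one,
        neg_div, div_eq_inv_mul, ← neg_mul]
  rw [lintegral_congr_ae hae,
    ProbabilityTheory.lintegral_exponentialPDF_eq_one (inv_pos.mpr hr)]

/-- The product measure `ν_h` on `ℝ^L` whose `j`-th factor has Lebesgue density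
`w ↦ λ_j⁻¹ e^{−(w − G_j h)/λ_j} 𝟙{w > G_j h}` (exponential with scale `λ_j`
shifted to start at `G_j h`). -/
def nuMeas {L : ℕ} (lams G : Fin L → ℝ) (h : ℝ) : Measure (Fin L → ℝ) :=
  Measure.pi fun j => (volume : Measure ℝ).withDensity fun w =>
    ENNReal.ofReal ((lams j)⁻¹ * exp (-(w - G j * h) / lams j) * if G j * h < w then 1 else 0)

/-- Power envelope against positive alternatives in the limit experiment of the
covariate model, when every `G_j > 0`, with `λ = (Σ_j G_j/λ_j)⁻¹`. -/
theorem nu_power_envelope_pos (L : ℕ) (hL : 1 ≤ L) (lams G : Fin L → ℝ)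
    (hlams : ∀ j, 0 < lams j) (hG : ∀ j, 0 < G j) (α : ℝ) (hα : α ∈ Set.Ioo (0 : ℝ) 1)
    (ψ : (Fin L → ℝ) → ℝ) (hmeas : Measurable ψ) (hrange : ∀ w, ψ w ∈ Set.Icc (0 : ℝ) 1)
    (hsize : ∫ w, ψ w ∂ nuMeas lams G 0 ≤ α) :
    ∀ h : ℝ, 0 < h →
      ∫ w, ψ w ∂ nuMeas lams G h ≤ min (α * exp (h / (∑ j, G j / lams j)⁻¹)) 1 := by
  intro h hpos
  set S : ℝ := ∑ j, G j / lams j with hS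
  set d : ℝ → Fin L → ℝ → ℝ≥0∞ := fun t j w =>
    ENNReal.ofReal ((lams j)⁻¹ * exp (-(w - G j * t) / lams j) * if G j * t < w then 1 else 0)
    with hd
  have hdmeas : ∀ (t : ℝ) (j : Fin L), Measurable (d t j) := by
    intro t j
    apply Measurable.ennreal_ofReal
    apply Measurable.mul
    · exact measurable_const.mul
        (((measurable_id.sub_const _).neg.div_const _).exp)
    · exact Measurable.ite (measurableSet_lt measurable_const measurable_id)
        measurable_const measurable_const
  have hrepr : ∀ t : ℝ, nuMeas lams G t =
      (Measure.pi fun _ : Fin L => (volume : Measure ℝ)).withDensity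
        (fun x => ∏ j, d t j (x j)) := fun t => pi_withDensity_eq _ (fun j => hdmeas t j)
  -- probability measures
  have hprob : ∀ t : ℝ, IsProbabilityMeasure (nuMeas lams G t) := by
    intro t
    refine ⟨?_⟩
    rw [nuMeas, Measure.pi_univ]
    have : ∀ j : Fin L, ((volume : Measure ℝ).withDensity fun w =>
        ENNReal.ofReal ((lams j)⁻¹ * exp (-(w - G j * t) / lams j) *
          if G j * t < w then 1 else 0)) Set.univ = 1 := by
      intro j
      rw [withDensity_apply _ MeasurableSet.univ, Measure.restrict_univ]
      exact factor_mass (hlams j) (G j * t)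
    simp only [this, Finset.prod_const_one]
  haveI := hprob h
  haveI := hprob 0
  set c : ℝ≥0∞ := ENNReal.ofReal (exp (h * S)) with hc
  have hc0 : c ≠ 0 := (ENNReal.ofReal_pos.mpr (exp_pos _)).ne'
  have hctop : c ≠ ⊤ := ENNReal.ofReal_ne_top
  -- per-factor density comparison
  have hfac : ∀ (j : Fin L) (w : ℝ),
      d h j w ≤ ENNReal.ofReal (exp (G j * h / lams j)) * d 0 j w := by
    intro j w
    by_cases hw : G j * h < w
    · have hw0 : G j * 0 < w := by
        rw [mul_zero]; exact lt_trans (mul_pos (hG j) hpos) hw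
      simp only [hd]
      rw [← ENNReal.ofReal_mul (exp_nonneg _)]
      apply ENNReal.ofReal_le_ofReal
      rw [if_pos hw, if_pos hw0, mul_one, mul_one]
      have : -(w - G j * h) / lams j = G j * h / lams j + -(w - G j * 0) / lams j := by
        field_simp
        ring
      rw [this, exp_add]
      exact le_of_eq (by ring)
    · simp only [hd]
      rw [if_neg hw, mul_zero, ENNReal.ofReal_zero]
      exact zero_le
  -- full density comparison
  have hDle : ∀ x : Fin L → ℝ, ∏ j, d h j (x j) ≤ c * ∏ j, d 0 j (x j) := by
    intro x
    calc ∏ j, d h j (x j)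
        ≤ ∏ j, (ENNReal.ofReal (exp (G j * h / lams j)) * d 0 j (x j)) :=
          Finset.prod_le_prod' fun j _ => hfac j (x j)
      _ = (∏ j, ENNReal.ofReal (exp (G j * h / lams j))) * ∏ j, d 0 j (x j) :=
          Finset.prod_mul_distrib
      _ = c * ∏ j, d 0 j (x j) := by
          congr 1
          rw [← ENNReal.ofReal_prod_of_nonneg (fun _ _ => exp_nonneg _), ← exp_sum]
          have hsum : ∑ j, G j * h / lams j = h * S := by
            rw [hS, Finset.mul_sum]
            exact Finset.sum_congr rfl fun j _ => by ring
          rw [hsum]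
  -- measure inequality
  have hle : nuMeas lams G h ≤ c • nuMeas lams G 0 := by
    rw [hrepr h, hrepr 0]
    have hm0 : Measurable fun x : Fin L → ℝ => ∏ j, d 0 j (x j) :=
      Finset.measurable_prod _ fun j _ => (hdmeas 0 j).comp (measurable_pi_apply j)
    calc (Measure.pi fun _ : Fin L => (volume : Measure ℝ)).withDensity
          (fun x => ∏ j, d h j (x j))
        ≤ (Measure.pi fun _ : Fin L => (volume : Measure ℝ)).withDensity
          (fun x => c * ∏ j, d 0 j (x j)) :=
          withDensity_mono (Filter.Eventually.of_forall fun x => hDle x)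
      _ = c • (Measure.pi fun _ : Fin L => (volume : Measure ℝ)).withDensity
          (fun x => ∏ j, d 0 j (x j)) := withDensity_smul c hm0
  -- integrability
  have hint0 : Integrable ψ (nuMeas lams G 0) := by
    refine (integrable_const (1 : ℝ)).mono' hmeas.aestronglyMeasurable ?_
    exact Filter.Eventually.of_forall fun w => by
      rw [norm_eq_abs, abs_le]
      exact ⟨by linarith [(hrange w).1], (hrange w).2⟩
  have hinth : Integrable ψ (nuMeas lams G h) := by
    refine (integrable_const (1 : ℝ)).mono' hmeas.aestronglyMeasurable ?_
    exact Filter.Eventually.of_forall fun w => by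
      rw [norm_eq_abs, abs_le]
      exact ⟨by linarith [(hrange w).1], (hrange w).2⟩
  refine le_min ?_ ?_
  · calc ∫ w, ψ w ∂ nuMeas lams G h
        ≤ ∫ w, ψ w ∂ (c • nuMeas lams G 0) :=
          integral_mono_measure hle
            (Filter.Eventually.of_forall fun w => (hrange w).1)
            ((integrable_smul_measure hc0 hctop).mpr hint0)
      _ = c.toReal * ∫ w, ψ w ∂ nuMeas lams G 0 := by
          rw [integral_smul_measure]; rfl
      _ ≤ c.toReal * α := by
          exact mul_le_mul_of_nonneg_left hsize ENNReal.toReal_nonneg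
      _ = α * exp (h / S⁻¹) := by
          rw [hc, ENNReal.toReal_ofReal (exp_nonneg _), div_eq_mul_inv, inv_inv]
          ring
  · calc ∫ w, ψ w ∂ nuMeas lams G h
        ≤ ∫ _, (1 : ℝ) ∂ nuMeas lams G h :=
          integral_mono hinth (integrable_const 1) fun w => (hrange w).2
      _ = 1 := by simp
end
end

section
/- Let N ⊆ ℝ be an open interval containing θ0, let f : ℝ × N → ℝ be jointly continuous, and let g : N → ℝ be continuously differentiable. Suppose that (a) for every y ∈ ℝ the map θ ↦ f(y,θ) is differentiable on N with (y,θ) ↦ ∂θf(y,θ) jointly continuous; (b) there is an integrable function F : ℝ → ℝ such that |∂θf(y,θ)| ≤ F(y) for all θ ∈ N and all y ≥ inf_{θ∈N} g(θ); (c) y ↦ f(y,θ) is integrable on [g(θ), ∞) for each θ ∈ N; and (d) ∫_{g(θ)}^{∞} f(y,θ) dy = 1 for every θ ∈ N. Then ∫_{g(θ0)}^{∞} ∂θf(y,θ0) dy = f(g(θ0), θ0)·g'(θ0). (This is the identity E[∂θ log f(Y|θ0)] = λ^{-1} for the boundary model, used in the proof of the weak convergence of the likelihood-ratio process.) -/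
open MeasureTheory Real

lemma integral_Ici_split (h : ℝ → ℝ) (p q : ℝ) (hpq : p ≤ q)
    (hq : IntegrableOn h (Set.Ici q)) (hpqI : IntegrableOn h (Set.Ico p q)) :
    ∫ y in Set.Ici p, h y = (∫ y in p..q, h y) + ∫ y in Set.Ici q, h y := by
  rw [← Set.Ico_union_Ici_eq_Ici hpq,
    setIntegral_union ((Set.Iio_disjoint_Ici le_rfl).mono_left Set.Ico_subset_Iio_self)
      measurableSet_Ici hpqI hq,
    intervalIntegral.integral_of_le hpq, setIntegral_congr_set Ico_ae_eq_Ioc]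

/-- Differentiation under the integral sign at a moving boundary:
`∫_{g(θ0)}^∞ ∂_θ f(y, θ0) dy = f(g(θ0), θ0) · g'(θ0)`, i.e. the identity
`E[∂_θ log f(Y|θ0)] = λ⁻¹` for the boundary model. -/
theorem deriv_under_integral_boundary (θ0 : ℝ) (N : Set ℝ) (hNopen : IsOpen N)
    (hNconv : Convex ℝ N) (hθ0 : θ0 ∈ N)
    (f fθ : ℝ → ℝ → ℝ) (g : ℝ → ℝ)
    (hf_cont : ContinuousOn (fun p : ℝ × ℝ => f p.1 p.2) (Set.univ ×ˢ N))
    (hg : ContDiffOn ℝ 1 g N)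
    (hderiv : ∀ y : ℝ, ∀ θ ∈ N, HasDerivAt (fun t => f y t) (fθ y θ) θ)
    (hfθ_cont : ContinuousOn (fun p : ℝ × ℝ => fθ p.1 p.2) (Set.univ ×ˢ N))
    (F : ℝ → ℝ) (hF : Integrable F)
    (hdom : ∀ θ ∈ N, ∀ y : ℝ, (⨅ θ' ∈ N, g θ') ≤ y → |fθ y θ| ≤ F y)
    (hint : ∀ θ ∈ N, IntegrableOn (fun y => f y θ) (Set.Ici (g θ)))
    (hone : ∀ θ ∈ N, ∫ y in Set.Ici (g θ), f y θ = 1) :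
    ∫ y in Set.Ici (g θ0), fθ y θ0 = f (g θ0) θ0 * deriv g θ0 := by
  have hopen : IsOpen ((Set.univ : Set ℝ) ×ˢ N) := isOpen_univ.prod hNopen
  -- continuity of sections
  have hfc : ∀ θ ∈ N, Continuous (fun y => f y θ) := by
    intro θ hθ
    rw [continuous_iff_continuousAt]
    intro y
    exact (hf_cont.continuousAt (hopen.mem_nhds ⟨trivial, hθ⟩)).comp
      ((continuous_id.prodMk continuous_const).continuousAt)
  have hfθc : ∀ θ ∈ N, Continuous (fun y => fθ y θ) := by
    intro θ hθ
    rw [continuous_iff_continuousAt]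
    intro y
    exact (hfθ_cont.continuousAt (hopen.mem_nhds ⟨trivial, hθ⟩)).comp
      ((continuous_id.prodMk continuous_const).continuousAt)
  -- g differentiable at θ0
  have hgdiff : HasDerivAt g (deriv g θ0) θ0 :=
    (((hg.differentiableOn one_ne_zero) θ0 hθ0).differentiableAt
      (hNopen.mem_nhds hθ0)).hasDerivAt
  have hgcontAt : ContinuousAt g θ0 := hgdiff.continuousAt
  -- pick ε0 > 0 with closedBall θ0 ε0 ⊆ N and |g θ - g θ0| < 1 there
  obtain ⟨δ, hδpos, hδN⟩ := Metric.isOpen_iff.mp hNopen θ0 hθ0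
  obtain ⟨δ1, hδ1pos, hδ1⟩ := Metric.continuousAt_iff.mp hgcontAt 1 one_pos
  set ε0 : ℝ := min (δ / 2) (δ1 / 2) with hε0def
  have hε0pos : 0 < ε0 := lt_min (by linarith) (by linarith)
  have hballN : Metric.closedBall θ0 ε0 ⊆ N := fun x hx => hδN (by
    have : dist x θ0 ≤ ε0 := hx
    have h2 : ε0 ≤ δ / 2 := min_le_left _ _
    exact Metric.mem_ball.2 (by linarith))
  have hgball : ∀ θ ∈ Metric.closedBall θ0 ε0, |g θ - g θ0| < 1 := by
    intro θ hθ
    have : dist θ θ0 ≤ ε0 := hθ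
    have h2 : ε0 ≤ δ1 / 2 := min_le_right _ _
    have := hδ1 (show dist θ θ0 < δ1 by linarith)
    simpa [Real.dist_eq] using this
  set a : ℝ := g θ0 - 2 with hadef
  have hag : ∀ θ ∈ Metric.closedBall θ0 ε0, a < g θ := by
    intro θ hθ
    have := abs_lt.1 (hgball θ hθ)
    simp only [hadef]; linarith [this.1]
  -- domination bound
  set m : ℝ := ⨅ θ' ∈ N, g θ' with hmdef
  set c : ℝ := max a m with hcdef
  obtain ⟨C, hC⟩ : ∃ C, ∀ p ∈ Set.Icc a c ×ˢ Metric.closedBall θ0 ε0,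
      ‖fθ p.1 p.2‖ ≤ C := by
    apply (isCompact_Icc.prod (isCompact_closedBall θ0 ε0)).exists_bound_of_continuousOn
    exact hfθ_cont.mono (Set.prod_mono (Set.subset_univ _) hballN)
  set bound : ℝ → ℝ := fun y => |F y| + Set.indicator (Set.Icc a c) (fun _ => max C 0) y
    with hbdef
  have hbound_int : Integrable bound := by
    apply hF.abs.add
    rw [integrable_indicator_iff measurableSet_Icc]
    exact integrableOn_const measure_Icc_lt_top.ne
  have hbound_le : ∀ θ ∈ Metric.closedBall θ0 ε0, ∀ y, a ≤ y → |fθ y θ| ≤ bound y := by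
    intro θ hθ y hy
    rcases le_or_gt y c with h | h
    · have hmem : (y, θ) ∈ Set.Icc a c ×ˢ Metric.closedBall θ0 ε0 := ⟨⟨hy, h⟩, hθ⟩
      have := hC (y, θ) hmem
      simp only [hbdef]
      rw [Set.indicator_of_mem (show y ∈ Set.Icc a c from ⟨hy, h⟩)]
      calc |fθ y θ| ≤ C := this
        _ ≤ max C 0 := le_max_left _ _
        _ ≤ |F y| + max C 0 := le_add_of_nonneg_left (abs_nonneg _)
    · have hmy : m ≤ y := le_of_lt (lt_of_le_of_lt (le_max_right a m) h)
      have := hdom θ (hballN hθ) y hmy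
      simp only [hbdef]
      calc |fθ y θ| ≤ F y := this
        _ ≤ |F y| := le_abs_self _
        _ ≤ |F y| + Set.indicator (Set.Icc a c) (fun _ => max C 0) y :=
            le_add_of_nonneg_right (Set.indicator_nonneg (fun _ _ => le_max_right _ _) _)
  -- Claim A: derivative of fixed-domain integral
  have hA : HasDerivAt (fun θ => ∫ y in Set.Ici (g θ0), f y θ)
      (∫ y in Set.Ici (g θ0), fθ y θ0) θ0 := by
    have := hasDerivAt_integral_of_dominated_loc_of_deriv_le (μ := volume.restrict (Set.Ici (g θ0)))
      (F := fun θ y => f y θ) (F' := fun θ y => fθ y θ) (x₀ := θ0) (bound := bound) (Metric.ball_mem_nhds θ0 hε0pos)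
      ?_ ?_ ?_ ?_ ?_ ?_
    · exact this.2
    · filter_upwards [hNopen.mem_nhds hθ0] with θ hθ
      exact ((hfc θ hθ).aestronglyMeasurable).restrict
    · exact hint θ0 hθ0
    · exact ((hfθc θ0 hθ0).aestronglyMeasurable).restrict
    · filter_upwards [self_mem_ae_restrict measurableSet_Ici] with y hy
      intro θ hθ
      have hθ' : θ ∈ Metric.closedBall θ0 ε0 := Metric.ball_subset_closedBall hθ
      have hay : a ≤ y := by
        have : g θ0 ≤ y := hy
        simp only [hadef]; linarith
      simpa [Real.norm_eq_abs] using hbound_le θ hθ' y hay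
    · exact hbound_int.restrict
    · filter_upwards with y
      intro θ hθ
      exact hderiv y θ (hballN (Metric.ball_subset_closedBall hθ))
  -- Claim B: derivative of moving boundary term
  set f0 : ℝ := f (g θ0) θ0 with hf0def
  set L : ℝ := deriv g θ0 with hLdef
  have hB : HasDerivAt (fun θ => ∫ y in (g θ0)..(g θ), f y θ) (f0 * L) θ0 := by
    rw [hasDerivAt_iff_isLittleO]
    have key : (fun θ => (∫ y in (g θ0)..(g θ), f y θ) - f0 * (g θ - g θ0))
        =o[nhds θ0] fun θ => g θ - g θ0 := by
      rw [Asymptotics.isLittleO_iff]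
      intro ε hε
      obtain ⟨η, hηpos, hη⟩ := Metric.continuousAt_iff.mp
        (hf_cont.continuousAt (x := ((g θ0, θ0) : ℝ × ℝ))
          (hopen.mem_nhds ⟨trivial, hθ0⟩)) ε hε
      have e1 : ∀ᶠ θ in nhds θ0, |g θ - g θ0| < η := by
        filter_upwards [Metric.tendsto_nhds.mp hgcontAt.tendsto η hηpos] with θ h
        simpa [Real.dist_eq] using h
      have e2 : ∀ᶠ θ in nhds θ0, dist θ θ0 < η := by
        filter_upwards [Metric.ball_mem_nhds θ0 hηpos] with θ h
        exact Metric.mem_ball.mp h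
      have e3 : ∀ᶠ θ in nhds θ0, θ ∈ N := hNopen.mem_nhds hθ0
      filter_upwards [e1, e2, e3] with θ he1 he2 he3
      have hcont := hfc θ he3
      have heq : (∫ y in (g θ0)..(g θ), f y θ) - f0 * (g θ - g θ0)
          = ∫ y in (g θ0)..(g θ), (f y θ - f0) := by
        rw [intervalIntegral.integral_sub (hcont.intervalIntegrable _ _)
          intervalIntegrable_const, intervalIntegral.integral_const, smul_eq_mul]
        ring
      have hb : ∀ y ∈ Set.uIoc (g θ0) (g θ), ‖f y θ - f0‖ ≤ ε := by
        intro y hy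
        have hy2 := Set.mem_uIoc.mp hy
        have hb1 := le_abs_self (g θ - g θ0)
        have hb2 := neg_abs_le (g θ - g θ0)
        have hy' : |y - g θ0| ≤ |g θ - g θ0| := by
          rw [abs_le]
          rcases hy2 with ⟨hA, hB⟩ | ⟨hA, hB⟩ <;> constructor <;> linarith
        have hd : dist ((y, θ) : ℝ × ℝ) ((g θ0, θ0) : ℝ × ℝ) < η := by
          rw [Prod.dist_eq]
          exact max_lt (by rw [Real.dist_eq]; linarith) he2
        have := hη hd
        rw [Real.dist_eq] at this
        simpa [Real.norm_eq_abs, hf0def] using this.le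
      calc ‖(∫ y in (g θ0)..(g θ), f y θ) - f0 * (g θ - g θ0)‖
          = ‖∫ y in (g θ0)..(g θ), (f y θ - f0)‖ := by rw [heq]
        _ ≤ ε * |g θ - g θ0| := intervalIntegral.norm_integral_le_of_norm_le_const hb
        _ = ε * ‖g θ - g θ0‖ := rfl
    have hO : (fun θ => g θ - g θ0) =O[nhds θ0] fun θ => θ - θ0 := hgdiff.isBigO_sub
    have h1 := key.trans_isBigO hO
    have h2 : (fun θ => f0 * (g θ - g θ0 - (θ - θ0) * L)) =o[nhds θ0] fun θ => θ - θ0 := by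
      have := hasDerivAt_iff_isLittleO.mp hgdiff
      simpa [smul_eq_mul] using this.const_mul_left f0
    have hsum := h1.add h2
    have heqf : (fun θ => (∫ y in (g θ0)..(g θ), f y θ)
          - (∫ y in (g θ0)..(g θ0), f y θ0) - (θ - θ0) • (f0 * L))
        = fun θ => ((∫ y in (g θ0)..(g θ), f y θ) - f0 * (g θ - g θ0))
          + f0 * (g θ - g θ0 - (θ - θ0) * L) := by
      funext θ
      simp only [intervalIntegral.integral_same, smul_eq_mul, sub_zero]
      ring
    rw [heqf]
    exact hsum
  -- Claim C: eventual equality with constant 1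
  have hψ : (fun θ => (∫ y in Set.Ici (g θ0), f y θ) - ∫ y in (g θ0)..(g θ), f y θ)
      =ᶠ[nhds θ0] fun _ => (1 : ℝ) := by
    filter_upwards [hNopen.mem_nhds hθ0, Metric.closedBall_mem_nhds θ0 hε0pos] with θ hθN hθB
    have hcont := hfc θ hθN
    have hIa : IntegrableOn (fun y => f y θ) (Set.Ici a) := by
      refine ((hcont.integrableOn_Icc (a := a) (b := g θ)).union (hint θ hθN)).mono_set ?_
      intro y hy
      rcases le_total y (g θ) with h | h
      · exact Or.inl ⟨hy, h⟩
      · exact Or.inr h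
    have haθ : a ≤ g θ := (hag θ hθB).le
    have haθ0 : a ≤ g θ0 := by simp only [hadef]; linarith
    have h1 := integral_Ici_split (fun y => f y θ) a (g θ) haθ (hint θ hθN)
      (hIa.mono_set Set.Ico_subset_Ici_self)
    have h2 := integral_Ici_split (fun y => f y θ) a (g θ0) haθ0
      (hIa.mono_set (Set.Ici_subset_Ici.2 haθ0)) (hIa.mono_set Set.Ico_subset_Ici_self)
    have h3 : (∫ y in a..(g θ0), f y θ) + ∫ y in (g θ0)..(g θ), f y θ
        = ∫ y in a..(g θ), f y θ :=
      intervalIntegral.integral_add_adjacent_intervals (hcont.intervalIntegrable _ _)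
        (hcont.intervalIntegrable _ _)
    have h4 := hone θ hθN
    linarith [h1, h2, h3, h4]
  have h0 : HasDerivAt (fun θ => (∫ y in Set.Ici (g θ0), f y θ) - ∫ y in (g θ0)..(g θ), f y θ)
      ((∫ y in Set.Ici (g θ0), fθ y θ0) - f0 * L) θ0 := hA.sub hB
  have h1 : HasDerivAt (fun θ => (∫ y in Set.Ici (g θ0), f y θ) - ∫ y in (g θ0)..(g θ), f y θ)
      0 θ0 := (hasDerivAt_const θ0 (1 : ℝ)).congr_of_eventuallyEq hψ
  have := h0.unique h1
  have : (∫ y in Set.Ici (g θ0), fθ y θ0) = f0 * L := by linarith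
  simpa [hf0def, hLdef] using this
end
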